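/- Let N ≥ 1, K ≥ 2, γ > 0, p > 0, and let y_{k,n} (for k = 1,…,K−1 and n = 1,…,N) be reals with 0 ≤ γ y_{k,n}/p ≤ 1. Define weights by w_{1,n} = 1 and w_{k+1,n} = w_{k,n}·exp(γ y_{k,n}/p), set W_k = Σ_{n=1}^N w_{k,n} and q_{k,n} = w_{k,n}/W_k. Then ln(W_K / W_1) ≤ Σ_{k=1}^{K−1} [ (γ/p) Σ_{n=1}^N q_{k,n} y_{k,n} + (e−2)(γ/p)² Σ_{n=1}^N q_{k,n} y_{k,n}² ]. -/

import Mathlib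

private lemma exp_tsum (t : ℝ) : Real.exp t = ∑' n : ℕ, t ^ n / n.factorial := by
  rw [Real.exp_eq_exp_ℝ, NormedSpace.exp_eq_tsum_div]

private lemma exp_quad {x : ℝ} (h0 : 0 ≤ x) (h1 : x ≤ 1) :
    Real.exp x ≤ 1 + x + (Real.exp 1 - 2) * x ^ 2 := by
  have hsum : ∀ t : ℝ, Summable (fun n : ℕ => t ^ n / n.factorial) :=
    Real.summable_pow_div_factorial
  have hsumx2 : Summable (fun n : ℕ => x ^ (n + 2) / (n + 2).factorial) :=
    (summable_nat_add_iff (f := fun n : ℕ => x ^ n / n.factorial) 2).2 (hsum x)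
  have hf1 : Summable (fun n : ℕ => (1 : ℝ) / n.factorial) := by simpa using hsum 1
  have hsum12 : Summable (fun n : ℕ => (1 : ℝ) / (n + 2).factorial) :=
    (summable_nat_add_iff (f := fun n : ℕ => (1:ℝ) / n.factorial) 2).2 hf1
  have hx : Real.exp x = (1 + x) + ∑' n : ℕ, x ^ (n + 2) / (n + 2).factorial := by
    have h := Summable.sum_add_tsum_nat_add (f := fun n : ℕ => x ^ n / n.factorial) 2 (hsum x)
    rw [exp_tsum, ← h]
    norm_num [Finset.sum_range_succ]
  have he : Real.exp 1 - 2 = ∑' n : ℕ, (1 : ℝ) / (n + 2).factorial := by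
    have h := Summable.sum_add_tsum_nat_add (f := fun n : ℕ => (1:ℝ) / n.factorial) 2 hf1
    have h1 : Real.exp 1 = ∑' n : ℕ, (1 : ℝ) / n.factorial := by
      rw [exp_tsum]; simp
    rw [h1, ← h]
    norm_num [Finset.sum_range_succ]
  have hbound : (∑' n : ℕ, x ^ (n + 2) / (n + 2).factorial)
      ≤ ∑' n : ℕ, x ^ 2 * ((1 : ℝ) / (n + 2).factorial) := by
    refine Summable.tsum_le_tsum (fun n => ?_) hsumx2 (hsum12.mul_left _)
    have hfac : (0 : ℝ) < (n + 2).factorial := by positivity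
    rw [mul_one_div, div_le_div_iff_of_pos_right hfac]
    exact pow_le_pow_of_le_one h0 h1 (by omega)
  calc Real.exp x = (1 + x) + ∑' n : ℕ, x ^ (n + 2) / (n + 2).factorial := hx
    _ ≤ (1 + x) + ∑' n : ℕ, x ^ 2 * ((1 : ℝ) / (n + 2).factorial) := by linarith
    _ = 1 + x + (Real.exp 1 - 2) * x ^ 2 := by rw [tsum_mul_left, he]; ring

private lemma tele_sum (f : ℕ → ℝ) (K : ℕ) (hK : 1 ≤ K) :
    ∑ k ∈ Finset.Ico 1 K, (f (k + 1) - f k) = f K - f 1 := by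
  induction K, hK using Nat.le_induction with
  | base => simp
  | succ n hn ih => rw [Finset.sum_Ico_succ_top hn, ih]; ring

theorem exp4_log_weight_upper_bound (N K : ℕ) (hN : 1 ≤ N) (hK : 2 ≤ K)
    (γ p : ℝ) (hγ : 0 < γ) (hp : 0 < p)
    (y : ℕ → Fin N → ℝ)
    (hy : ∀ k ∈ Finset.Ico 1 K, ∀ n, 0 ≤ γ * y k n / p ∧ γ * y k n / p ≤ 1)
    (w : ℕ → Fin N → ℝ)
    (hw1 : ∀ n, w 1 n = 1)
    (hwrec : ∀ k ∈ Finset.Ico 1 K, ∀ n, w (k + 1) n = w k n * Real.exp (γ * y k n / p))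
    (W : ℕ → ℝ) (hW : ∀ k, W k = ∑ n, w k n)
    (q : ℕ → Fin N → ℝ) (hq : ∀ k n, q k n = w k n / W k) :
    Real.log (W K / W 1) ≤
      ∑ k ∈ Finset.Ico 1 K,
        ((γ / p) * ∑ n, q k n * y k n
          + (Real.exp 1 - 2) * (γ / p) ^ 2 * ∑ n, q k n * y k n ^ 2) := by
  have hK1 : 1 ≤ K := by omega
  haveI : Nonempty (Fin N) := Fin.pos_iff_nonempty.mp (by omega)
  -- positivity of weights
  have hwpos : ∀ k, 1 ≤ k → k ≤ K → ∀ n, 0 < w k n := by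
    intro k hk1
    induction k, hk1 using Nat.le_induction with
    | base => intro _ n; rw [hw1]; norm_num
    | succ m hm ih =>
      intro hmK n
      rw [hwrec m (Finset.mem_Ico.2 ⟨hm, by omega⟩) n]
      exact mul_pos (ih (by omega) n) (Real.exp_pos _)
  have hWpos : ∀ k, 1 ≤ k → k ≤ K → 0 < W k := by
    intro k hk1 hkK
    rw [hW]
    exact Finset.sum_pos (fun n _ => hwpos k hk1 hkK n) Finset.univ_nonempty
  -- telescoping
  have htele : Real.log (W K / W 1) =
      ∑ k ∈ Finset.Ico 1 K, Real.log (W (k + 1) / W k) := by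
    have h1 : ∀ k ∈ Finset.Ico 1 K,
        Real.log (W (k + 1) / W k) = Real.log (W (k + 1)) - Real.log (W k) := by
      intro k hk
      rw [Finset.mem_Ico] at hk
      exact Real.log_div (hWpos (k + 1) (by omega) (by omega)).ne'
        (hWpos k hk.1 (by omega)).ne'
    rw [Finset.sum_congr rfl h1, tele_sum (fun k => Real.log (W k)) K hK1,
      Real.log_div (hWpos K hK1 le_rfl).ne' (hWpos 1 le_rfl hK1).ne']
  rw [htele]
  refine Finset.sum_le_sum (fun k hk => ?_)
  have hkm := Finset.mem_Ico.mp hk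
  have hWk := hWpos k hkm.1 (by omega)
  have hWk1 := hWpos (k + 1) (by omega) (by omega)
  have hqsum : ∑ n, q k n = 1 := by
    simp only [hq, hW k]
    rw [← Finset.sum_div, div_self (by rw [← hW k]; exact hWk.ne')]
  have hratio : W (k + 1) / W k = ∑ n, q k n * Real.exp (γ * y k n / p) := by
    rw [hW (k + 1)]
    rw [Finset.sum_div]
    refine Finset.sum_congr rfl (fun n _ => ?_)
    rw [hwrec k hk n, hq]
    ring
  have hqpos : ∀ n, 0 ≤ q k n := fun n => by
    rw [hq]; exact le_of_lt (div_pos (hwpos k hkm.1 (by omega) n) hWk)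
  calc Real.log (W (k + 1) / W k) ≤ W (k + 1) / W k - 1 :=
        Real.log_le_sub_one_of_pos (div_pos hWk1 hWk)
    _ = (∑ n, q k n * Real.exp (γ * y k n / p)) - 1 := by rw [hratio]
    _ ≤ (∑ n, q k n * (1 + γ * y k n / p + (Real.exp 1 - 2) * (γ * y k n / p) ^ 2)) - 1 := by
        gcongr with n _
        · exact hqpos n
        · exact exp_quad (hy k hk n).1 (hy k hk n).2
    _ = (γ / p) * (∑ n, q k n * y k n)
          + (Real.exp 1 - 2) * (γ / p) ^ 2 * (∑ n, q k n * y k n ^ 2) := by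
        have : ∀ n : Fin N, q k n * (1 + γ * y k n / p + (Real.exp 1 - 2) * (γ * y k n / p) ^ 2)
            = q k n + (γ / p) * (q k n * y k n)
              + (Real.exp 1 - 2) * (γ / p) ^ 2 * (q k n * y k n ^ 2) := by
          intro n; field_simp
        rw [Finset.sum_congr rfl (fun n _ => this n)]
        rw [Finset.sum_add_distrib, Finset.sum_add_distrib, ← Finset.mul_sum, ← Finset.mul_sum,
          hqsum]
        ring
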